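/- For n ≥ 1 and k ≥ 1, the number r_{nk} of rooted plane trees with n vertices whose protection number is at least k equals the finite sum over j ≥ 1 of (-1)^{j-1}·[binom(2n-3-(2k-1)j, n-(k+1)j) - binom(2n-3-(2k-1)j, n-3-(k+1)j)]. -/

import Mathlib

/-- Rooted plane (ordered) trees: a root together with a (possibly empty) list of subtrees. -/
inductive PlaneTree : Type
  | node : List PlaneTree → PlaneTree

/-- Number of vertices of a rooted plane tree. -/
def PlaneTree.size : PlaneTree → ℕ
  | .node cs => 1 + (cs.attach.map (fun t => PlaneTree.size t.1)).sum
decreasing_by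
  have := List.sizeOf_lt_of_mem t.2
  simp [PlaneTree.node.sizeOf_spec] at *
  omega

/-- The protection number of a rooted plane tree: `0` if the root is a leaf, otherwise
`1` plus the minimum of the protection numbers of the root's subtrees. -/
def PlaneTree.protectionNumber : PlaneTree → ℕ
  | .node [] => 0
  | .node (c :: cs) =>
      1 + List.foldl min (PlaneTree.protectionNumber c)
            (cs.attach.map (fun t => PlaneTree.protectionNumber t.1))
decreasing_by
  · simp; omega
  · have := List.sizeOf_lt_of_mem t.2
    simp at *
    omega

/-- Binomial coefficient `binom a b` for integers, equal to `0` when `b < 0` or `b > a`. -/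
def intChoose (a b : ℤ) : ℤ :=
  if 0 ≤ b ∧ b ≤ a then (Nat.choose a.toNat b.toNat : ℤ) else 0

/-- The number of rooted plane trees with `n` vertices and protection number at least `k`
equals `∑_{j≥1} (-1)^{j-1} [binom(2n-3-(2k-1)j, n-(k+1)j) - binom(2n-3-(2k-1)j, n-3-(k+1)j)]`
(the terms vanish for `j > n`). -/


lemma intChoose_of_neg {a b : ℤ} (h : b < 0) : intChoose a b = 0 := by
  rw [intChoose, if_neg]; omega

lemma intChoose_of_lt {a b : ℤ} (h : a < b) : intChoose a b = 0 := by
  rw [intChoose, if_neg]; omega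

lemma intChoose_eval {a b : ℤ} (h0 : 0 ≤ b) (ha : 0 ≤ a) :
    intChoose a b = (Nat.choose a.toNat b.toNat : ℤ) := by
  by_cases h : b ≤ a
  · rw [intChoose, if_pos ⟨h0, h⟩]
  · rw [intChoose, if_neg (by omega), Nat.choose_eq_zero_of_lt (by omega), Nat.cast_zero]

lemma intChoose_pascal {a b : ℤ} (ha : 1 ≤ a) :
    intChoose a b = intChoose (a - 1) b + intChoose (a - 1) (b - 1) := by
  rcases lt_or_ge b 0 with hb | hb
  · rw [intChoose_of_neg hb, intChoose_of_neg hb, intChoose_of_neg (by omega)]; ring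
  rcases eq_or_lt_of_le hb with hb0 | hb1
  · rw [← hb0, intChoose_eval le_rfl (by omega), intChoose_eval le_rfl (by omega),
      intChoose_of_neg (by omega)]
    simp
  · rw [intChoose_eval (by omega) (by omega), intChoose_eval (by omega) (by omega),
      intChoose_eval (by omega) (by omega)]
    have h1 : a.toNat = (a - 1).toNat + 1 := by omega
    have h2 : b.toNat = (b - 1).toNat + 1 := by omega
    rw [h1, h2, Nat.choose_succ_succ]
    push_cast
    ring

lemma intChoose_symm {a b : ℤ} (ha : 0 ≤ a) : intChoose a b = intChoose a (a - b) := by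
  rcases lt_or_ge b 0 with hb | hb
  · rw [intChoose_of_neg hb, intChoose_of_lt (by omega)]
  rcases lt_or_ge a b with hab | hab
  · rw [intChoose_of_lt hab, intChoose_of_neg (by omega)]
  · rw [intChoose_eval hb ha, intChoose_eval (by omega) ha]
    have h1 : (a - b).toNat = a.toNat - b.toNat := by omega
    rw [h1, Nat.choose_symm (by omega)]

/-- ballot number: coefficient of x^m in C(x)^p -/
def Bb (m p : ℤ) : ℤ := intChoose (2*m - p - 1) (m - p) - intChoose (2*m - p - 1) (m - p - 1)

lemma Bb_of_lt {m p : ℤ} (h : m < p) : Bb m p = 0 := by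
  rw [Bb, intChoose_of_neg (by omega), intChoose_of_neg (by omega)]; ring

lemma Bb_rec {m p : ℤ} (hm : 1 ≤ m) (hp : 2 ≤ p) :
    Bb m p = Bb m (p + 1) + Bb (m - 1) (p - 1) := by
  rcases le_or_gt (2*m - p - 1) 0 with h | h
  · rw [Bb_of_lt (by omega), Bb_of_lt (by omega), Bb_of_lt (by omega)]; ring
  · rw [Bb, Bb, Bb,
      intChoose_pascal (a := 2*m - p - 1) (b := m - p) (by omega),
      intChoose_pascal (a := 2*m - p - 1) (b := m - p - 1) (by omega)]
    ring_nf

lemma Bb_one {m : ℤ} (hm : 1 ≤ m) : Bb m 1 = Bb m 2 + (if m = 1 then 1 else 0) := by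
  rcases eq_or_lt_of_le hm with h1 | h2
  · simp [← h1, Bb, intChoose]
  · rw [if_neg (by omega), add_zero, Bb, Bb,
      intChoose_pascal (a := 2*m - 1 - 1) (b := m - 1) (by omega),
      intChoose_pascal (a := 2*m - 1 - 1) (b := m - 1 - 1) (by omega),
      intChoose_symm (a := 2*m - 1 - 1 - 1) (b := m - 1) (by omega)]
    ring_nf

lemma Bb_triple {m j : ℤ} (hj : 1 ≤ j) :
    Bb m (3*j) - Bb m (3*j+1) + Bb m (3*j+2) =
      intChoose (2*m - 3*j - 3) (m - 3*j) - intChoose (2*m - 3*j - 3) (m - 3*j - 3) := by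
  rcases le_or_gt (2*m - 3*j - 3) (-1) with h | h
  · have hq : m - 3*j ≤ -1 := by omega
    rw [Bb, Bb, Bb,
      intChoose_of_neg (a := 2*m - 3*j - 1) (b := m - 3*j) (by omega),
      intChoose_of_neg (a := 2*m - 3*j - 1) (b := m - 3*j - 1) (by omega),
      intChoose_of_neg (a := 2*m - (3*j+1) - 1) (b := m - (3*j+1)) (by omega),
      intChoose_of_neg (a := 2*m - (3*j+1) - 1) (b := m - (3*j+1) - 1) (by omega),
      intChoose_of_neg (a := 2*m - (3*j+2) - 1) (b := m - (3*j+2)) (by omega),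
      intChoose_of_neg (a := 2*m - (3*j+2) - 1) (b := m - (3*j+2) - 1) (by omega),
      intChoose_of_neg (a := 2*m - 3*j - 3) (b := m - 3*j) (by omega),
      intChoose_of_neg (a := 2*m - 3*j - 3) (b := m - 3*j - 3) (by omega)]
    ring
  · rw [Bb, Bb, Bb,
      intChoose_pascal (a := 2*m - 3*j - 1) (b := m - 3*j) (by omega),
      intChoose_pascal (a := 2*m - 3*j - 1) (b := m - 3*j - 1) (by omega),
      intChoose_pascal (a := 2*m - (3*j+1) - 1) (b := m - (3*j+1)) (by omega),
      intChoose_pascal (a := 2*m - (3*j+1) - 1) (b := m - (3*j+1) - 1) (by omega),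
      intChoose_pascal (a := 2*m - 3*j - 1 - 1) (b := m - 3*j) (by omega),
      intChoose_pascal (a := 2*m - 3*j - 1 - 1) (b := m - 3*j - 1) (by omega),
      intChoose_pascal (a := 2*m - 3*j - 1 - 1) (b := m - 3*j - 1 - 1) (by omega)]
    ring_nf

namespace PlaneTree

lemma size_node (cs : List PlaneTree) : (node cs).size = 1 + (cs.map size).sum := by
  rw [size, List.attach_map_val]

lemma size_pos (t : PlaneTree) : 1 ≤ t.size := by
  cases t with
  | node cs => rw [size_node]; omega

lemma le_foldl_min (k a : ℕ) (l : List ℕ) :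
    k ≤ l.foldl min a ↔ k ≤ a ∧ ∀ x ∈ l, k ≤ x := by
  induction l generalizing a with
  | nil => simp
  | cons x l ih =>
    rw [List.foldl_cons, ih]
    simp [le_min_iff]
    tauto

lemma succ_le_prot_iff (k : ℕ) (l : List PlaneTree) :
    k + 1 ≤ (node l).protectionNumber ↔ l ≠ [] ∧ ∀ c ∈ l, k ≤ c.protectionNumber := by
  cases l with
  | nil =>
    rw [protectionNumber]
    simp
  | cons c cs =>
    rw [protectionNumber, List.attach_map_val]
    have : k + 1 ≤ 1 + List.foldl min c.protectionNumber (cs.map protectionNumber) ↔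
        k ≤ List.foldl min c.protectionNumber (cs.map protectionNumber) := by omega
    rw [this, le_foldl_min]
    simp

/-- total size of a forest -/
def totalSize (l : List PlaneTree) : ℕ := (l.map size).sum

lemma totalSize_nil : totalSize [] = 0 := rfl

lemma totalSize_cons (c : PlaneTree) (l : List PlaneTree) :
    totalSize (c :: l) = c.size + totalSize l := by
  simp [totalSize]

lemma forest_finite : ∀ s : ℕ, {l : List PlaneTree | totalSize l = s}.Finite := by
  intro s
  induction s using Nat.strong_induction_on with
  | _ s IH =>
  rcases Nat.eq_zero_or_pos s with hs | hs
  · subst hs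
    apply Set.Finite.subset (Set.finite_singleton ([] : List PlaneTree))
    intro l hl
    cases l with
    | nil => simp
    | cons c l =>
      exfalso
      have h1 := size_pos c
      have h2 : totalSize (c :: l) = 0 := hl
      rw [totalSize_cons] at h2
      omega
  · have htree : ∀ m, m ≤ s → {t : PlaneTree | t.size = m}.Finite := by
      intro m hm
      apply Set.Finite.subset ((IH (m - 1) (by omega)).image node)
      intro t ht
      cases t with
      | node cs =>
        refine ⟨cs, ?_, rfl⟩
        have h2 : (node cs).size = m := ht
        rw [size_node] at h2
        simp only [Set.mem_setOf_eq, totalSize]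
        omega
    apply Set.Finite.subset (Set.Finite.biUnion (Finset.Icc 1 s).finite_toSet
      (fun m hm => (((htree m (by simp at hm; omega)).prod (IH (s - m)
        (by simp at hm; omega))).image (fun p => p.1 :: p.2))))
    intro l hl
    cases l with
    | nil =>
      exfalso
      have : totalSize ([] : List PlaneTree) = s := hl
      rw [totalSize_nil] at this; omega
    | cons c l =>
      have h2 : totalSize (c :: l) = s := hl
      rw [totalSize_cons] at h2
      have h1 := size_pos c
      simp only [Set.mem_iUnion]
      refine ⟨c.size, by simp; omega, (c, l), ⟨rfl, by simp; omega⟩, rfl⟩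

lemma tree_finite (n : ℕ) : {t : PlaneTree | t.size = n}.Finite := by
  apply Set.Finite.subset ((forest_finite (n - 1)).image node)
  intro t ht
  cases t with
  | node cs =>
    refine ⟨cs, ?_, rfl⟩
    have h2 : (node cs).size = n := ht
    rw [size_node] at h2
    simp only [Set.mem_setOf_eq, totalSize]
    omega

end PlaneTree

namespace PlaneTree

noncomputable def rr (n k : ℕ) : ℕ :=
  {t : PlaneTree | t.size = n ∧ k ≤ t.protectionNumber}.ncard

noncomputable def ffc (s k : ℕ) : ℕ :=
  {l : List PlaneTree | totalSize l = s ∧ ∀ c ∈ l, k ≤ c.protectionNumber}.ncard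

lemma node_inj : Function.Injective node := by
  intro a b h
  injection h

lemma cons_inj : Function.Injective (fun p : PlaneTree × List PlaneTree => p.1 :: p.2) := by
  rintro ⟨a, b⟩ ⟨c, d⟩ h
  simp only [List.cons.injEq] at h
  simp [h.1, h.2]

lemma totalSize_eq_zero {l : List PlaneTree} (h : totalSize l = 0) : l = [] := by
  cases l with
  | nil => rfl
  | cons c l' =>
    exfalso
    have := size_pos c
    rw [totalSize_cons] at h
    omega

lemma rr_zero (k : ℕ) : rr 0 k = 0 := by
  rw [rr]
  convert Set.ncard_empty PlaneTree
  ext t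
  simp only [Set.mem_setOf_eq, Set.mem_empty_iff_false, iff_false, not_and]
  intro h
  have := size_pos t
  omega

lemma ffc_zero (k : ℕ) : ffc 0 k = 1 := by
  rw [ffc]
  have : {l : List PlaneTree | totalSize l = 0 ∧ ∀ c ∈ l, k ≤ c.protectionNumber}
      = {([] : List PlaneTree)} := by
    ext l
    simp only [Set.mem_setOf_eq, Set.mem_singleton_iff]
    constructor
    · rintro ⟨h, -⟩; exact totalSize_eq_zero h
    · rintro rfl; exact ⟨rfl, by simp⟩
  rw [this, Set.ncard_singleton]

lemma rr_one_succ (k : ℕ) : rr 1 (k + 1) = 0 := by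
  rw [rr]
  convert Set.ncard_empty PlaneTree
  ext t
  simp only [Set.mem_setOf_eq, Set.mem_empty_iff_false, iff_false, not_and]
  cases t with
  | node cs =>
    intro hsz hpr
    rw [size_node] at hsz
    have hcs : cs = [] := by
      cases cs with
      | nil => rfl
      | cons c l' => exfalso; have := size_pos c; simp at hsz; omega
    subst hcs
    rw [succ_le_prot_iff] at hpr
    exact hpr.1 rfl

lemma rr_base {n : ℕ} (hn : 1 ≤ n) : rr n 0 = ffc (n - 1) 0 := by
  rw [rr, ffc]
  have : {t : PlaneTree | t.size = n ∧ 0 ≤ t.protectionNumber}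
      = node '' {l | totalSize l = n - 1 ∧ ∀ c ∈ l, 0 ≤ c.protectionNumber} := by
    ext t
    cases t with
    | node cs =>
      simp only [Set.mem_setOf_eq, Set.mem_image]
      constructor
      · rintro ⟨hsz, -⟩
        rw [size_node] at hsz
        exact ⟨cs, ⟨by simp only [totalSize]; omega, by simp⟩, rfl⟩
      · rintro ⟨l, ⟨htot, -⟩, hl⟩
        injection hl with hl'
        subst hl'
        rw [size_node]
        exact ⟨by simp only [totalSize] at htot; omega, by simp⟩
  rw [this, Set.ncard_image_of_injective _ node_inj]

lemma rr_step {n k : ℕ} (hn : 2 ≤ n) : rr n (k + 1) = ffc (n - 1) k := by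
  rw [rr, ffc]
  have : {t : PlaneTree | t.size = n ∧ k + 1 ≤ t.protectionNumber}
      = node '' {l | totalSize l = n - 1 ∧ ∀ c ∈ l, k ≤ c.protectionNumber} := by
    ext t
    cases t with
    | node cs =>
      simp only [Set.mem_setOf_eq, Set.mem_image]
      constructor
      · rintro ⟨hsz, hpr⟩
        rw [size_node] at hsz
        rw [succ_le_prot_iff] at hpr
        exact ⟨cs, ⟨by simp only [totalSize]; omega, hpr.2⟩, rfl⟩
      · rintro ⟨l, ⟨htot, hpr⟩, hl⟩
        injection hl with hl'
        subst hl'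
        constructor
        · rw [size_node]; simp only [totalSize] at htot; omega
        · rw [succ_le_prot_iff]
          refine ⟨?_, hpr⟩
          intro hnil
          subst hnil
          rw [totalSize_nil] at htot
          omega
  rw [this, Set.ncard_image_of_injective _ node_inj]

lemma S_finite (n k : ℕ) : {t : PlaneTree | t.size = n ∧ k ≤ t.protectionNumber}.Finite :=
  Set.Finite.subset (tree_finite n) (fun t ht => ht.1)

lemma L_finite (s k : ℕ) :
    {l : List PlaneTree | totalSize l = s ∧ ∀ c ∈ l, k ≤ c.protectionNumber}.Finite :=
  Set.Finite.subset (forest_finite s) (fun l hl => hl.1)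

lemma ncard_prod' {α β : Type*} (A : Set α) (B : Set β) :
    (A ×ˢ B).ncard = A.ncard * B.ncard := by
  rw [← Nat.card_coe_set_eq, ← Nat.card_coe_set_eq, ← Nat.card_coe_set_eq,
    Nat.card_congr (Equiv.Set.prod A B), Nat.card_prod]

lemma ncard_biUnion' {α : Type*} (t : Finset ℕ) (A : ℕ → Set α)
    (hfin : ∀ m ∈ t, (A m).Finite)
    (hdisj : ∀ m ∈ t, ∀ m' ∈ t, m ≠ m' → Disjoint (A m) (A m')) :
    (⋃ m ∈ t, A m).ncard = ∑ m ∈ t, (A m).ncard := by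
  classical
  induction t using Finset.induction_on with
  | empty => simp
  | insert a t ha ih =>
    have hf2 : (⋃ x ∈ t, A x).Finite := by
      rw [← Finset.set_biUnion_coe]
      exact Set.Finite.biUnion (Finset.finite_toSet t)
        (fun m hm => hfin m (Finset.mem_insert_of_mem hm))
    have hd2 : Disjoint (A a) (⋃ x ∈ t, A x) := by
      rw [← Finset.set_biUnion_coe, Set.disjoint_iUnion₂_right]
      intro m hm
      simp only [Finset.mem_coe] at hm
      exact hdisj a (Finset.mem_insert_self a t) m (Finset.mem_insert_of_mem hm)
        (by rintro rfl; exact ha hm)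
    rw [Finset.set_biUnion_insert, Finset.sum_insert ha,
      Set.ncard_union_eq hd2 (hfin a (Finset.mem_insert_self a t)) hf2,
      ih (fun m hm => hfin m (Finset.mem_insert_of_mem hm))
        (fun m hm m' hm' h => hdisj m (Finset.mem_insert_of_mem hm) m'
          (Finset.mem_insert_of_mem hm') h)]

lemma ffc_succ {s k : ℕ} (hs : 1 ≤ s) :
    ffc s k = ∑ m ∈ Finset.Icc 1 s, rr m k * ffc (s - m) k := by
  have hset : {l : List PlaneTree | totalSize l = s ∧ ∀ c ∈ l, k ≤ c.protectionNumber}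
      = ⋃ m ∈ Finset.Icc 1 s, (fun p : PlaneTree × List PlaneTree => p.1 :: p.2) ''
          ({t | t.size = m ∧ k ≤ t.protectionNumber} ×ˢ
            {l | totalSize l = s - m ∧ ∀ c ∈ l, k ≤ c.protectionNumber}) := by
    ext l
    constructor
    · rintro ⟨htot, hprot⟩
      cases l with
      | nil => exfalso; rw [totalSize_nil] at htot; omega
      | cons c l' =>
        simp only [Set.mem_iUnion]
        have h1 := size_pos c
        rw [totalSize_cons] at htot
        refine ⟨c.size, by simp only [Finset.mem_coe, Finset.mem_Icc]; omega, (c, l'),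
          ⟨⟨rfl, hprot c (by simp)⟩, ⟨show totalSize l' = s - c.size by omega,
            fun c' hc' => hprot c' (by simp [hc'])⟩⟩, rfl⟩
    · intro h
      simp only [Set.mem_iUnion] at h
      obtain ⟨m, hm, ⟨c, l'⟩, ⟨⟨hsz, hpc⟩, ⟨htot, hpl⟩⟩, rfl⟩ := h
      simp only [Finset.mem_coe, Finset.mem_Icc] at hm
      constructor
      · rw [totalSize_cons, hsz, htot]; omega
      · intro c' hc'
        rcases List.mem_cons.mp hc' with h | h
        · subst h; exact hpc
        · exact hpl c' h
  rw [ffc, hset, ncard_biUnion']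
  · refine Finset.sum_congr rfl fun m hm => ?_
    rw [Set.ncard_image_of_injective _ cons_inj, ncard_prod']
    rfl
  · intro m hm
    exact Set.Finite.image _ ((S_finite m k).prod (L_finite (s - m) k))
  · intro m hm m' hm' hne
    rw [Set.disjoint_left]
    rintro x ⟨⟨c, l'⟩, ⟨⟨hsz, -⟩, -⟩, rfl⟩ ⟨⟨c2, l2⟩, ⟨⟨hsz2, -⟩, -⟩, hx⟩
    simp only [List.cons.injEq] at hx
    obtain ⟨rfl, rfl⟩ := hx
    exact hne (hsz ▸ hsz2 ▸ rfl)

end PlaneTree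

namespace PlaneTree

open PowerSeries

noncomputable def Rs (k : ℕ) : PowerSeries ℤ := PowerSeries.mk fun n => (rr n k : ℤ)
noncomputable def Fp (k : ℕ) : PowerSeries ℤ := PowerSeries.mk fun s => (ffc s k : ℤ)

lemma coeff_Rs (k n : ℕ) : (coeff n) (Rs k) = (rr n k : ℤ) := coeff_mk _ _
lemma coeff_Fp (k n : ℕ) : (coeff n) (Fp k) = (ffc n k : ℤ) := coeff_mk _ _

lemma Fp_eq (k : ℕ) : Fp k = 1 + Rs k * Fp k := by
  ext n
  rw [map_add, PowerSeries.coeff_mul, coeff_Fp, PowerSeries.coeff_one]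
  cases n with
  | zero =>
    simp [coeff_Rs, coeff_Fp, rr_zero, ffc_zero]
  | succ m =>
    rw [if_neg (by omega), Finset.Nat.sum_antidiagonal_eq_sum_range_succ_mk]
    have hrange : Finset.range (m + 1 + 1) = insert 0 (Finset.Icc 1 (m + 1)) := by
      ext x
      simp only [Finset.mem_range, Finset.mem_insert, Finset.mem_Icc]
      omega
    rw [hrange, Finset.sum_insert (by simp), coeff_Rs]
    rw [rr_zero, Nat.cast_zero, zero_mul, zero_add, zero_add]
    have := ffc_succ (s := m + 1) (k := k) (by omega)
    rw [this]
    push_cast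
    refine Finset.sum_congr rfl fun j hj => ?_
    rw [coeff_Rs, coeff_Fp]

lemma Rs_base : Rs 0 = X * Fp 0 := by
  ext n
  cases n with
  | zero =>
    rw [coeff_Rs, rr_zero, PowerSeries.coeff_zero_eq_constantCoeff, map_mul, constantCoeff_X,
      zero_mul, Nat.cast_zero]
  | succ m =>
    rw [PowerSeries.coeff_succ_X_mul, coeff_Rs, coeff_Fp, rr_base (by omega)]
    simp

lemma Rs_step (k : ℕ) : Rs (k + 1) = X * (Rs k * Fp k) := by
  have h : Rs k * Fp k = Fp k - 1 := by linear_combination - Fp_eq k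
  ext n
  cases n with
  | zero =>
    rw [coeff_Rs, rr_zero, PowerSeries.coeff_zero_eq_constantCoeff, map_mul, constantCoeff_X,
      zero_mul, Nat.cast_zero]
  | succ m =>
    rw [PowerSeries.coeff_succ_X_mul, h, map_sub, coeff_Fp, PowerSeries.coeff_one, coeff_Rs]
    cases m with
    | zero => rw [rr_one_succ, if_pos rfl, ffc_zero]; norm_num
    | succ m' =>
      rw [if_neg (by omega), sub_zero, rr_step (by omega)]
      simp

noncomputable def Cs : PowerSeries ℤ := Rs 0

lemma Cs_def : Cs = X * Fp 0 := Rs_base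

lemma Cs_eq : Cs = X + Cs ^ 2 := by
  have h0 : Cs = X * Fp 0 := Rs_base
  have h1 : Fp 0 = 1 + Cs * Fp 0 := Fp_eq 0
  calc Cs = X * Fp 0 := h0
    _ = X * (1 + Cs * Fp 0) := by rw [← h1]
    _ = X + Cs * (X * Fp 0) := by ring
    _ = X + Cs ^ 2 := by rw [← h0]; ring

lemma X_dvd_Cs : (X : PowerSeries ℤ) ∣ Cs := ⟨Fp 0, Cs_def⟩

lemma hXC : (X : PowerSeries ℤ) = Cs * (1 - Cs) := by linear_combination - Cs_eq

lemma isUnit_one_sub_Cs : IsUnit (1 - Cs) := by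
  rw [PowerSeries.isUnit_iff_constantCoeff, map_sub, map_one]
  have : constantCoeff Cs = 0 := by
    rw [← PowerSeries.coeff_zero_eq_constantCoeff, Cs, coeff_Rs, rr_zero, Nat.cast_zero]
  rw [this, sub_zero]
  exact isUnit_one

noncomputable def Vs : PowerSeries ℤ := Ring.inverse (1 - Cs)

lemma hVs : (1 - Cs) * Vs = 1 := Ring.mul_inverse_cancel _ isUnit_one_sub_Cs

lemma hVs2 : ((1 - Cs) * Vs) ^ 2 = 1 := by rw [hVs, one_pow]

noncomputable def Ds : ℕ → PowerSeries ℤ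
  | 0 => 1
  | (k + 1) => Ds k - Cs ^ (k + 1) * (1 - Cs) ^ k

lemma hRD : ∀ k : ℕ, Rs k * Ds k = Cs ^ (k + 1) * (1 - Cs) ^ k := by
  intro k
  induction k with
  | zero =>
    show Rs 0 * 1 = Cs ^ 1 * (1 - Cs) ^ 0
    rw [pow_one, pow_zero, mul_one, mul_one]; rfl
  | succ k IH =>
    have hrec : Rs (k + 1) * (1 - Rs k) = X * Rs k := by
      rw [Rs_step]
      linear_combination (X * Rs k) * Fp_eq k
    show Rs (k + 1) * (Ds k - Cs ^ (k + 1) * (1 - Cs) ^ k) = Cs ^ (k + 2) * (1 - Cs) ^ (k + 1)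
    linear_combination (Ds k) * hrec + (Rs (k + 1) + X) * IH + (Cs ^ (k + 1) * (1 - Cs) ^ k) * hXC

lemma hD2 : ∀ k : ℕ, (1 - Cs + Cs ^ 2) * Ds k = (1 - Cs) ^ 2 + Cs ^ (k + 1) * (1 - Cs) ^ k := by
  intro k
  induction k with
  | zero =>
    show (1 - Cs + Cs ^ 2) * 1 = (1 - Cs) ^ 2 + Cs ^ 1 * (1 - Cs) ^ 0
    ring
  | succ k IH =>
    show (1 - Cs + Cs ^ 2) * (Ds k - Cs ^ (k + 1) * (1 - Cs) ^ k)
        = (1 - Cs) ^ 2 + Cs ^ (k + 2) * (1 - Cs) ^ (k + 1)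
    linear_combination IH

end PlaneTree

namespace PlaneTree

open PowerSeries

lemma coeff_Cs_zero_of_lt {m p : ℕ} (h : m < p) : (coeff m) (Cs ^ p) = 0 :=
  (PowerSeries.X_pow_dvd_iff.mp (pow_dvd_pow_of_dvd X_dvd_Cs p)) m h

lemma Cs_pow_rel (p : ℕ) : Cs ^ (p + 1) = X * Cs ^ p + Cs ^ (p + 2) := by
  linear_combination (Cs ^ p) * Cs_eq

lemma Bcoeff : ∀ m p : ℕ, 1 ≤ p → (coeff m) (Cs ^ p) = Bb (m : ℤ) (p : ℤ) := by
  intro m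
  induction m using Nat.strong_induction_on with
  | _ m IHm =>
    have aux : ∀ i p, 1 ≤ p → m < p + i → (coeff m) (Cs ^ p) = Bb (m : ℤ) (p : ℤ) := by
      intro i
      induction i with
      | zero =>
        intro p hp hmp
        rw [coeff_Cs_zero_of_lt (by omega), Bb_of_lt (by exact_mod_cast hmp)]
      | succ i IH =>
        intro p hp hmp
        by_cases hcase : m < p + i
        · exact IH p hp hcase
        · obtain ⟨p', rfl⟩ : ∃ p', p = p' + 1 := ⟨p - 1, by omega⟩
          have hm1 : 1 ≤ m := by omega
          obtain ⟨m', rfl⟩ : ∃ m', m = m' + 1 := ⟨m - 1, by omega⟩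
          rw [Cs_pow_rel p', map_add, PowerSeries.coeff_succ_X_mul,
            IH (p' + 2) (by omega) (by omega)]
          cases p' with
          | zero =>
            rw [pow_zero, PowerSeries.coeff_one]
            have hBb := Bb_one (m := (m' + 1 : ℕ)) (by exact_mod_cast hm1)
            push_cast at hBb ⊢
            rw [hBb]
            have h01 : ((m' : ℤ) + 1 = 1) ↔ (m' = 0) := by omega
            simp only [h01]
            split_ifs <;> ring
          | succ q =>
            rw [IHm m' (by omega) (q + 1) (by omega)]
            have hBb := Bb_rec (m := (m' + 1 : ℕ)) (p := (q + 2 : ℕ))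
              (by exact_mod_cast hm1) (by push_cast; omega)
            push_cast at hBb ⊢
            ring_nf at hBb ⊢
            linarith [hBb]
    exact fun p hp => aux (m + 1) p hp (by omega)

end PlaneTree

namespace PlaneTree

open PowerSeries

theorem main_count (n k : ℕ) (hn : 1 ≤ n) (hk : 1 ≤ k) :
    ((rr n k : ℤ)) =
      ∑ j ∈ Finset.Icc 1 n, (-1 : ℤ) ^ (j - 1) *
        (intChoose (2 * n - 3 - (2 * k - 1) * j) (n - (k + 1) * j) -
         intChoose (2 * n - 3 - (2 * k - 1) * j) (n - 3 - (k + 1) * j)) := by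
  obtain ⟨k', rfl⟩ : ∃ k', k = k' + 1 := ⟨k - 1, by omega⟩
  obtain ⟨w, hw⟩ : ∃ w : PowerSeries ℤ, w = Cs ^ (k' + 2) * ((1 - Cs) ^ (k' + 1) * (Vs * Vs)) :=
    ⟨_, rfl⟩
  have E : Rs (k' + 1) * (1 - Cs) ^ 2
      = (1 - Cs + Cs ^ 2) * (Cs ^ (k' + 2) * (1 - Cs) ^ (k' + 1))
        - Rs (k' + 1) * (Cs ^ (k' + 2) * (1 - Cs) ^ (k' + 1)) := by
    linear_combination (1 - Cs + Cs ^ 2) * hRD (k' + 1) - (Rs (k' + 1)) * hD2 (k' + 1)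
  have hEw : Rs (k' + 1) = (1 - Cs + Cs ^ 2) * w - Rs (k' + 1) * w := by
    rw [hw]
    linear_combination (Vs * Vs) * E - (Rs (k' + 1)) * hVs2
  have Hiter : ∀ J : ℕ, Rs (k' + 1) = (1 - Cs + Cs ^ 2) *
      (∑ j ∈ Finset.Icc 1 J, (-1 : PowerSeries ℤ) ^ (j - 1) * w ^ j)
      + (-1 : PowerSeries ℤ) ^ J * (Rs (k' + 1) * w ^ J) := by
    intro J
    induction J with
    | zero => simp
    | succ J IH =>
      have hstep : (-1 : PowerSeries ℤ) ^ J * (Rs (k' + 1) * w ^ J)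
          = (1 - Cs + Cs ^ 2) * ((-1 : PowerSeries ℤ) ^ J * w ^ (J + 1))
            + (-1 : PowerSeries ℤ) ^ (J + 1) * (Rs (k' + 1) * w ^ (J + 1)) := by
        linear_combination ((-1 : PowerSeries ℤ) ^ J * w ^ J) * hEw
      rw [Finset.sum_Icc_succ_top (by omega : 1 ≤ J + 1), Nat.add_sub_cancel]
      conv_lhs => rw [IH]
      rw [hstep]
      ring
  have hXw2 : (X : PowerSeries ℤ) ^ 2 ∣ w := by
    have h1 : (X : PowerSeries ℤ) ^ 2 ∣ Cs ^ (k' + 2) :=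
      dvd_trans (pow_dvd_pow X (by omega)) (pow_dvd_pow_of_dvd X_dvd_Cs _)
    rw [hw]
    exact h1.mul_right _
  have hcoeffn : (coeff n) (Rs (k' + 1)) =
      ∑ j ∈ Finset.Icc 1 n,
        (coeff n) ((1 - Cs + Cs ^ 2) * ((-1 : PowerSeries ℤ) ^ (j - 1) * w ^ j)) := by
    have hdvd : (X : PowerSeries ℤ) ^ (2 * n) ∣ (-1 : PowerSeries ℤ) ^ n * (Rs (k' + 1) * w ^ n) := by
      rw [pow_mul]
      exact dvd_trans (pow_dvd_pow_of_dvd hXw2 n)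
        ⟨(-1 : PowerSeries ℤ) ^ n * Rs (k' + 1), by ring⟩
    have h0 := PowerSeries.X_pow_dvd_iff.mp hdvd n (by omega)
    rw [Hiter n, map_add, h0, add_zero, Finset.mul_sum, map_sum]
  have hscal : ∀ j : ℕ, (coeff n) ((1 - Cs + Cs ^ 2) * ((-1 : PowerSeries ℤ) ^ (j - 1) * w ^ j))
      = (-1 : ℤ) ^ (j - 1) * (coeff n) ((1 - Cs + Cs ^ 2) * w ^ j) := by
    intro j
    have hC : ((-1 : PowerSeries ℤ)) ^ (j - 1) = PowerSeries.C ((-1 : ℤ) ^ (j - 1)) := by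
      rw [map_pow, map_neg, map_one]
    rw [show (1 - Cs + Cs ^ 2) * ((-1 : PowerSeries ℤ) ^ (j - 1) * w ^ j)
        = (-1 : PowerSeries ℤ) ^ (j - 1) * ((1 - Cs + Cs ^ 2) * w ^ j) by ring, hC,
      PowerSeries.coeff_C_mul]
  have hXw : X * w = Cs ^ (k' + 3) * (1 - Cs) ^ k' := by
    rw [hw]
    linear_combination (Cs ^ (k' + 2) * ((1 - Cs) ^ (k' + 1) * (Vs * Vs))) * hXC
      + (Cs ^ (k' + 3) * (1 - Cs) ^ k') * hVs2
  have hterm : ∀ j : ℕ, 1 ≤ j → (coeff n) ((1 - Cs + Cs ^ 2) * w ^ j) =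
      intChoose (2 * (n : ℤ) - 3 - (2 * ((k' : ℤ) + 1) - 1) * j) ((n : ℤ) - (((k' : ℤ) + 1) + 1) * j)
      - intChoose (2 * (n : ℤ) - 3 - (2 * ((k' : ℤ) + 1) - 1) * j)
          ((n : ℤ) - 3 - (((k' : ℤ) + 1) + 1) * j) := by
    intro j hj
    have hkey : (1 - Cs + Cs ^ 2) * w ^ j * X ^ j
        = ((1 - Cs + Cs ^ 2) * Cs ^ (3 * j)) * X ^ (k' * j) := by
      have h1 : (X * w) ^ j = Cs ^ ((k' + 3) * j) * (1 - Cs) ^ (k' * j) := by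
        rw [hXw, mul_pow, ← pow_mul, ← pow_mul]
      have h2 : Cs ^ ((k' + 3) * j) = Cs ^ (3 * j) * Cs ^ (k' * j) := by
        rw [← pow_add]; congr 1; ring
      calc (1 - Cs + Cs ^ 2) * w ^ j * X ^ j = (1 - Cs + Cs ^ 2) * (X * w) ^ j := by
            rw [mul_pow]; ring
        _ = (1 - Cs + Cs ^ 2) * (Cs ^ ((k' + 3) * j) * (1 - Cs) ^ (k' * j)) := by rw [h1]
        _ = ((1 - Cs + Cs ^ 2) * Cs ^ (3 * j)) * (Cs * (1 - Cs)) ^ (k' * j) := by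
            rw [h2, mul_pow]; ring
        _ = ((1 - Cs + Cs ^ 2) * Cs ^ (3 * j)) * X ^ (k' * j) := by rw [← hXC]
    have hco : (coeff n) ((1 - Cs + Cs ^ 2) * w ^ j)
        = if k' * j ≤ n + j then (coeff (n + j - k' * j)) ((1 - Cs + Cs ^ 2) * Cs ^ (3 * j))
          else 0 := by
      rw [← PowerSeries.coeff_mul_X_pow ((1 - Cs + Cs ^ 2) * w ^ j) j n, hkey,
        PowerSeries.coeff_mul_X_pow']
    by_cases hcase : k' * j ≤ n + j
    · rw [hco, if_pos hcase]
      set m := n + j - k' * j with hm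
      have hmz : (m : ℤ) = (n : ℤ) + (j : ℤ) - ((k' * j : ℕ) : ℤ) := by omega
      have hexp : (1 - Cs + Cs ^ 2) * Cs ^ (3 * j) = Cs ^ (3 * j) - Cs ^ (3 * j + 1) + Cs ^ (3 * j + 2) := by
        ring
      rw [hexp, map_add, map_sub, Bcoeff m (3 * j) (by omega), Bcoeff m (3 * j + 1) (by omega),
        Bcoeff m (3 * j + 2) (by omega)]
      have htr := Bb_triple (m := (m : ℤ)) (j := (j : ℤ)) (by exact_mod_cast hj)
      push_cast
      rw [htr,
        show (2 * (m : ℤ) - 3 * (j : ℤ) - 3) = 2 * (n : ℤ) - 3 - (2 * ((k' : ℤ) + 1) - 1) * j by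
          rw [hmz]; push_cast; ring,
        show ((m : ℤ) - 3 * (j : ℤ)) = (n : ℤ) - (((k' : ℤ) + 1) + 1) * j by
          rw [hmz]; push_cast; ring]
      ring_nf
    · rw [hco, if_neg hcase]
      have hq : (n : ℤ) + (j : ℤ) < ((k' * j : ℕ) : ℤ) := by omega
      rw [show ((n : ℤ) - (((k' : ℤ) + 1) + 1) * j) = (n : ℤ) - ((k' * j : ℕ) : ℤ) - 2 * j by
          push_cast; ring,
        show ((n : ℤ) - 3 - (((k' : ℤ) + 1) + 1) * j) = (n : ℤ) - ((k' * j : ℕ) : ℤ) - 2 * j - 3 by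
          push_cast; ring,
        intChoose_of_neg (by omega), intChoose_of_neg (by omega)]
      norm_num
  rw [show ((rr n (k' + 1) : ℤ)) = (coeff n) (Rs (k' + 1)) from (coeff_Rs _ _).symm, hcoeffn]
  refine Finset.sum_congr rfl fun j hj => ?_
  rw [Finset.mem_Icc] at hj
  rw [hscal j, hterm j hj.1]
  push_cast
  ring

end PlaneTree


theorem protected_tree_count_explicit (n k : ℕ) (hn : 1 ≤ n) (hk : 1 ≤ k) :
    (Set.ncard {t : PlaneTree | t.size = n ∧ k ≤ t.protectionNumber} : ℤ) =
      ∑ j ∈ Finset.Icc 1 n, (-1 : ℤ) ^ (j - 1) *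
        (intChoose (2 * n - 3 - (2 * k - 1) * j) (n - (k + 1) * j) -
         intChoose (2 * n - 3 - (2 * k - 1) * j) (n - 3 - (k + 1) * j)) :=
  PlaneTree.main_count n k hn hk
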